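/- In the graph Γₙ (n ≥ 2), for 2 ≤ r ≤ n one can choose cliques D₁ = C₁, …, D_{r−1} = C_{r−1}, and D_r = C_r ∖ {v_r,…,v_n}, all of which are cliques, with D₁ ∩ ⋯ ∩ D_r = ∅ and |D₁| + ⋯ + |D_r| = (r−1)(n+1) + r; moreover no choice of r cliques with empty intersection achieves a larger total size. -/

import Mathlib

/-- The vertex set of the graph `Γₙ`: vertices `v₀, …, vₙ` (left) and `w₀, …, wₙ` (right). -/
def GammaVert (n : ℕ) : Type := Fin (n + 1) ⊕ Fin (n + 1)

/-- The graph `Γₙ`: all pairs among the `vⱼ` are adjacent, and `wᵢ` is adjacent to `vⱼ`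
iff `i ≠ j`; no two `w`'s are adjacent. -/
def Gamma (n : ℕ) : SimpleGraph (GammaVert n) :=
  SimpleGraph.fromRel fun a b =>
    match a, b with
    | Sum.inl _, Sum.inl _ => True
    | Sum.inl j, Sum.inr i => i ≠ j
    | Sum.inr i, Sum.inl j => i ≠ j
    | Sum.inr _, Sum.inr _ => False

instance (n : ℕ) : Fintype (GammaVert n) := by unfold GammaVert; infer_instance
instance (n : ℕ) : DecidableEq (GammaVert n) := by unfold GammaVert; infer_instance

/-- The maximal cliques of `Γₙ`: `C 0 = {v₀, …, vₙ}` and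
`C (i+1) = ({v₀, …, vₙ} \ {vᵢ}) ∪ {wᵢ}` for `0 ≤ i ≤ n`. -/
def maxClique (n : ℕ) (k : Fin (n + 2)) : Finset (GammaVert n) :=
  match k with
  | ⟨0, _⟩ => Finset.univ.image Sum.inl
  | ⟨i + 1, h⟩ =>
      ((Finset.univ.image Sum.inl).erase (Sum.inl ⟨i, by omega⟩)) ∪ {Sum.inr ⟨i, by omega⟩}

open Finset

lemma gamma_adj_ll (n : ℕ) (x y : Fin (n+1)) (h : x ≠ y) :
    (Gamma n).Adj (Sum.inl x) (Sum.inl y) := by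
  simp only [Gamma, SimpleGraph.fromRel_adj]
  exact ⟨fun hh => h (Sum.inl_injective hh), Or.inl trivial⟩

lemma gamma_adj_lr (n : ℕ) (x y : Fin (n+1)) (h : y ≠ x) :
    (Gamma n).Adj (Sum.inl x) (Sum.inr y) := by
  simp only [Gamma, SimpleGraph.fromRel_adj]
  exact ⟨Sum.inl_ne_inr, Or.inl h⟩

lemma gamma_not_adj_rr (n : ℕ) (x y : Fin (n+1)) :
    ¬ (Gamma n).Adj (Sum.inr x) (Sum.inr y) := by
  simp only [Gamma, SimpleGraph.fromRel_adj]
  rintro ⟨-, h | h⟩ <;> exact h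

lemma maxClique_isClique (n : ℕ) (k : Fin (n+2)) :
    (Gamma n).IsClique (maxClique n k : Set (GammaVert n)) := by
  obtain ⟨k, hk⟩ := k
  match k with
  | 0 =>
    intro a ha b hb hab
    simp only [maxClique, coe_image, coe_univ, Set.image_univ, Set.mem_range] at ha hb
    obtain ⟨x, -, rfl⟩ := Finset.mem_image.mp (Finset.mem_coe.mp ha)
    obtain ⟨y, -, rfl⟩ := Finset.mem_image.mp (Finset.mem_coe.mp hb)
    exact gamma_adj_ll n x y (by rintro rfl; exact hab rfl)
  | i + 1 =>
    intro a ha b hb hab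
    change a ∈ ((((Finset.univ.image Sum.inl).erase (Sum.inl ⟨i, by omega⟩)) ∪
      {Sum.inr ⟨i, by omega⟩} : Finset (Fin (n+1) ⊕ Fin (n+1))) : Set (Fin (n+1) ⊕ Fin (n+1))) at ha
    change b ∈ ((((Finset.univ.image Sum.inl).erase (Sum.inl ⟨i, by omega⟩)) ∪
      {Sum.inr ⟨i, by omega⟩} : Finset (Fin (n+1) ⊕ Fin (n+1))) : Set (Fin (n+1) ⊕ Fin (n+1))) at hb
    simp only [maxClique, coe_union, coe_erase, coe_image, coe_univ, Set.image_univ,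
      Set.mem_union, Set.mem_diff, Set.mem_range, coe_singleton, Set.mem_singleton_iff] at ha hb
    rcases ha with ⟨⟨x, rfl⟩, hax⟩ | rfl
    · rcases hb with ⟨⟨y, rfl⟩, hby⟩ | rfl
      · exact gamma_adj_ll n x y (by rintro rfl; exact hab rfl)
      · refine gamma_adj_lr n x _ ?_
        rintro rfl; exact hax (by simp)
    · rcases hb with ⟨⟨y, rfl⟩, hby⟩ | rfl
      · refine ((Gamma n).adj_symm (gamma_adj_lr n y _ ?_))
        rintro rfl; exact hby (by simp)
      · exact absurd rfl hab

lemma maxClique_card_zero (n : ℕ) (h : 0 < n+2) :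
    (maxClique n ⟨0, h⟩).card = n + 1 := by
  show (Finset.univ.image Sum.inl : Finset (Fin (n+1) ⊕ Fin (n+1))).card = n + 1
  simp [maxClique, Finset.card_image_of_injective _ Sum.inl_injective]

lemma maxClique_card_succ (n i : ℕ) (h : i + 1 < n+2) :
    (maxClique n ⟨i+1, h⟩).card = n + 1 := by
  have hmem : (Sum.inl ⟨i, by omega⟩ : GammaVert n) ∈ Finset.univ.image Sum.inl := by simp
  have hd : (Sum.inr ⟨i, by omega⟩ : Fin (n+1) ⊕ Fin (n+1)) ∉
      ((Finset.univ.image Sum.inl).erase (Sum.inl ⟨i, by omega⟩) : Finset (Fin (n+1) ⊕ Fin (n+1))) := by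
    simp
  show ((((Finset.univ.image Sum.inl).erase (Sum.inl ⟨i, by omega⟩)) ∪
      {Sum.inr ⟨i, by omega⟩} : Finset (Fin (n+1) ⊕ Fin (n+1)))).card = n + 1
  rw [union_comm, ← insert_eq, card_insert_of_notMem hd, card_erase_of_mem hmem,
    Finset.card_image_of_injective _ Sum.inl_injective]
  simp

open Classical in
lemma clique_card_bound (n : ℕ) (E : Finset (GammaVert n))
    (hE : (Gamma n).IsClique (E : Set (GammaVert n))) :
    E.card + (univ.filter fun j : Fin (n+1) => Sum.inl j ∉ E).card ≤ n + 2 := by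
  classical
  set W : Finset (GammaVert n) := E.filter (fun a => a.isRight) with hWdef
  have hW : W.card ≤ 1 := by
    rw [Finset.card_le_one]
    intro a ha b hb
    simp only [hWdef, mem_filter, Sum.isRight_iff] at ha hb
    obtain ⟨ha, hx⟩ := ha; obtain ⟨x, rfl⟩ := Sum.isRight_iff.mp hx
    obtain ⟨hb, hy⟩ := hb; obtain ⟨y, rfl⟩ := Sum.isRight_iff.mp hy
    by_contra hne
    exact gamma_not_adj_rr n x y (hE ha hb hne)
  set L : Finset (Fin (n+1)) := univ.filter (fun j => Sum.inl j ∈ E) with hLdef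
  have hsub : E ⊆ L.image Sum.inl ∪ W := by
    intro a ha
    rcases a with x | x
    · refine mem_union_left _ ?_
      apply Finset.mem_image.mpr
      exact ⟨x, Finset.mem_filter.mpr ⟨Finset.mem_univ _, ha⟩, rfl⟩
    · exact mem_union_right _ (Finset.mem_filter.mpr ⟨ha, rfl⟩)
  have h1 : E.card ≤ L.card + 1 := by
    calc E.card ≤ (L.image Sum.inl ∪ W).card := card_le_card hsub
      _ ≤ (L.image Sum.inl).card + W.card := card_union_le _ _
      _ ≤ L.card + 1 := by
          rw [Finset.card_image_of_injective _ Sum.inl_injective]; omega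
  have h2 : L.card + (univ.filter fun j : Fin (n+1) => Sum.inl j ∉ E).card = n + 1 := by
    rw [hLdef, Finset.card_filter_add_card_filter_not]
    simp
  omega

lemma sum_bound (n r : ℕ) (hr : 1 ≤ r) (E : Fin r → Finset (GammaVert n))
    (hcl : ∀ i, (Gamma n).IsClique (E i : Set (GammaVert n)))
    (hinf : Finset.univ.inf E = ∅) :
    (∑ i, (E i).card) ≤ (r - 1) * (n + 1) + r := by
  classical
  set M : Fin r → Finset (Fin (n+1)) := fun i => univ.filter fun j => Sum.inl j ∉ E i with hM
  have cover : (univ : Finset (Fin (n+1))) ⊆ univ.biUnion M := by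
    intro j _
    by_contra h
    simp only [mem_biUnion, hM, mem_filter, mem_univ, true_and, not_exists, not_and,
      not_not] at h
    have : Sum.inl j ∈ Finset.univ.inf E := by
      exact Finset.mem_inf.mpr (fun i _ => h i)
    rw [hinf] at this
    exact absurd this (notMem_empty _)
  have h1 : n + 1 ≤ ∑ i, (M i).card := by
    calc n + 1 = (univ : Finset (Fin (n+1))).card := by simp
      _ ≤ (univ.biUnion M).card := card_le_card cover
      _ ≤ ∑ i, (M i).card := card_biUnion_le
  have h2 : ∑ i, ((E i).card + (M i).card) ≤ r * (n + 2) := by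
    calc ∑ i, ((E i).card + (M i).card) ≤ ∑ _i : Fin r, (n + 2) :=
          Finset.sum_le_sum (fun i _ => clique_card_bound n (E i) (hcl i))
      _ = r * (n + 2) := by simp [mul_comm]
  rw [Finset.sum_add_distrib] at h2
  obtain ⟨s, rfl⟩ : ∃ s, r = s + 1 := ⟨r - 1, by omega⟩
  have h3 : (s + 1) * (n + 2) = s * (n + 1) + (s + 1) + (n + 1) := by ring
  have h4 : (s + 1 - 1) * (n + 1) = s * (n + 1) := by simp
  omega

lemma mem_inl_maxClique (n i : ℕ) (h : i+1 < n+2) (j : Fin (n+1)) :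
    Sum.inl j ∈ maxClique n ⟨i+1, h⟩ ↔ (j:ℕ) ≠ i := by
  show Sum.inl j ∈ ((((Finset.univ.image Sum.inl).erase (Sum.inl ⟨i, by omega⟩)) ∪
      {Sum.inr ⟨i, by omega⟩} : Finset (Fin (n+1) ⊕ Fin (n+1)))) ↔ _
  simp [Fin.ext_iff]

lemma mem_inr_maxClique (n i : ℕ) (h : i+1 < n+2) (j : Fin (n+1)) :
    Sum.inr j ∈ maxClique n ⟨i+1, h⟩ ↔ (j:ℕ) = i := by
  show Sum.inr j ∈ ((((Finset.univ.image Sum.inl).erase (Sum.inl ⟨i, by omega⟩)) ∪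
      {Sum.inr ⟨i, by omega⟩} : Finset (Fin (n+1) ⊕ Fin (n+1)))) ↔ _
  simp [Fin.ext_iff]

lemma filter_ge_card (n a : ℕ) (h : a < n+1) :
    (Finset.univ.filter fun j : Fin (n+1) => a ≤ (j:ℕ)).card = n + 1 - a := by
  have : (Finset.univ.filter fun j : Fin (n+1) => a ≤ (j:ℕ)) = Finset.Ici (⟨a, h⟩ : Fin (n+1)) := by
    ext j; simp [Fin.le_def]
  rw [this, Fin.card_Ici]

lemma Dlast_card (n s : ℕ) (h : s + 2 < n + 2) (hs : s + 2 ≤ n) :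
    ((maxClique n ⟨s+2, h⟩) \
      ((Finset.univ.filter fun j : Fin (n+1) => s+2 ≤ (j:ℕ)).image Sum.inl)).card = s + 2 := by
  set S := (Finset.univ.filter fun j : Fin (n+1) => s+2 ≤ (j:ℕ)).image
    (Sum.inl : Fin (n+1) → GammaVert n) with hSdef
  have hSsub : S ⊆ maxClique n ⟨s+2, h⟩ := by
    intro a ha
    simp only [hSdef, mem_image, mem_filter, mem_univ, true_and] at ha
    obtain ⟨j, hj, rfl⟩ := ha
    refine (mem_inl_maxClique n (s+1) h j).mpr ?_
    omega
  have hScard : S.card = n + 1 - (s + 2) := by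
    rw [hSdef, Finset.card_image_of_injective _ Sum.inl_injective, filter_ge_card]
    omega
  have hC : (maxClique n ⟨s+2, h⟩).card = n + 1 := maxClique_card_succ n (s+1) h
  have e := card_sdiff_of_subset hSsub
  exact e.trans (by erw [hC, hScard]; omega)

/-- For `2 ≤ r ≤ n`, the cliques `D₁ = C₁, …, D_{r-1} = C_{r-1}`,
`D_r = C_r − {v_r, …, v_n}` are cliques of `Γₙ` with empty common intersection and total
size `(r-1)(n+1) + r`, and no `r` cliques with empty common intersection do better. -/
theorem stmt_18 (n r : ℕ) (hn : 2 ≤ n) (hr : 2 ≤ r) (hrn : r ≤ n)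
    (D : Fin r → Finset (GammaVert n))
    (hD : ∀ i : Fin r,
      D i = if h : (i : ℕ) + 1 < r then maxClique n ⟨(i : ℕ) + 1, by omega⟩
        else (maxClique n ⟨r, by omega⟩) \
          ((Finset.univ.filter fun j : Fin (n + 1) => r ≤ (j : ℕ)).image Sum.inl)) :
    (∀ i, (Gamma n).IsClique (D i : Set (GammaVert n))) ∧
    Finset.univ.inf D = ∅ ∧
    (∑ i, (D i).card) = (r - 1) * (n + 1) + r ∧
    (∀ E : Fin r → Finset (GammaVert n),
      (∀ i, (Gamma n).IsClique (E i : Set (GammaVert n))) →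
      Finset.univ.inf E = ∅ →
      (∑ i, (E i).card) ≤ (r - 1) * (n + 1) + r) := by

  obtain ⟨s, rfl⟩ : ∃ s, r = s + 2 := ⟨r - 2, by omega⟩
  have hsn : s + 2 < n + 2 := by omega
  refine ⟨?_, ?_, ?_, fun E hcl hinf => sum_bound n (s+2) (by omega) E hcl hinf⟩
  · -- cliques
    intro i
    rw [hD i]
    split
    · exact maxClique_isClique n _
    · exact (maxClique_isClique n _).subset (by exact_mod_cast Finset.sdiff_subset)
  · -- empty intersection
    rw [Finset.eq_empty_iff_forall_notMem]
    intro x hx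
    have hxi : ∀ i, x ∈ D i := fun i => Finset.mem_of_subset (Finset.le_iff_subset.mp (Finset.inf_le (Finset.mem_univ i))) hx
    have hlast := hxi ⟨s+1, by omega⟩
    rw [hD ⟨s+1, by omega⟩] at hlast
    rw [dif_neg (by simp)] at hlast
    rw [Finset.mem_sdiff] at hlast
    obtain ⟨hmem, hnim⟩ := hlast
    rcases x with j | j
    · replace hmem := (mem_inl_maxClique n (s+1) hsn j).mp hmem
      have hj2 : ¬ (s + 2 ≤ (j:ℕ)) := by
        intro hc
        exact hnim (Finset.mem_image_of_mem _ (by simp [hc]))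
      have hjs : (j:ℕ) < s + 1 := by omega
      set i0 : Fin (s+2) := ⟨(j:ℕ), by omega⟩ with hi0
      have hcond : (i0:ℕ) + 1 < s + 2 := by simp [hi0]; omega
      have h0 := hxi i0
      rw [hD i0, dif_pos hcond] at h0
      replace h0 := (mem_inl_maxClique _ _ _ _).mp h0
      simp [hi0] at h0
    · replace hmem := (mem_inr_maxClique n (s+1) hsn j).mp hmem
      have h0 := hxi ⟨0, by omega⟩
      rw [hD ⟨0, by omega⟩, dif_pos (by simp)] at h0
      replace h0 := (mem_inr_maxClique n 0 (by omega) j).mp h0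
      simp at h0
      simp [h0] at hmem
  · -- sum
    rw [Fin.sum_univ_castSucc]
    have hmain : ∀ i : Fin (s+1), (D i.castSucc).card = n + 1 := by
      intro i
      rw [hD i.castSucc, dif_pos (by rw [Fin.coe_castSucc]; omega)]
      exact maxClique_card_succ n _ _
    have hlastc : (D (Fin.last (s+1))).card = s + 2 := by
      rw [hD (Fin.last (s+1)), dif_neg (by simp [Fin.last])]
      exact Dlast_card n s hsn (by omega)
    rw [Finset.sum_congr rfl (fun i _ => hmain i), hlastc, Finset.sum_const,
      Finset.card_univ, Fintype.card_fin, smul_eq_mul, show s + 2 - 1 = s + 1 from rfl]
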